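/- Let E be a Banach space with a Schauder basis. If E contains a C-subsymmetric sequence, for some constant C ≥ 1, then for any δ > 0 the space E also contains a (C + δ)-subsymmetric block sequence. -/

import Mathlib

open Filter Topology

/-- Two sequences of vectors are `c`-equivalent: the natural map between their spans
distorts norms of finite linear combinations by at most a factor `c`. -/
def SeqEquiv {E F : Type*} [NormedAddCommGroup E] [NormedSpace ℝ E]
    [NormedAddCommGroup F] [NormedSpace ℝ F]
    (c : ℝ) (x : ℕ → E) (y : ℕ → F) : Prop :=
  ∀ (s : Finset ℕ) (a : ℕ → ℝ),
    (1 / c) * ‖∑ i ∈ s, a i • x i‖ ≤ ‖∑ i ∈ s, a i • y i‖ ∧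
    ‖∑ i ∈ s, a i • y i‖ ≤ c * ‖∑ i ∈ s, a i • x i‖

/-- A basic sequence: nonzero vectors whose partial-sum projections are uniformly bounded,
i.e. a Schauder basis of its closed linear span. -/
def IsBasicSeq {E : Type*} [NormedAddCommGroup E] [NormedSpace ℝ E] (x : ℕ → E) : Prop :=
  (∀ n, x n ≠ 0) ∧
  ∃ K : ℝ, 1 ≤ K ∧ ∀ (a : ℕ → ℝ) (m n : ℕ), m ≤ n →
    ‖∑ i ∈ Finset.range m, a i • x i‖ ≤ K * ‖∑ i ∈ Finset.range n, a i • x i‖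

/-- An unconditional basic sequence. -/
def IsUnconditionalSeq {E : Type*} [NormedAddCommGroup E] [NormedSpace ℝ E]
    (x : ℕ → E) : Prop :=
  IsBasicSeq x ∧
  ∃ K : ℝ, 0 < K ∧ ∀ (s : Finset ℕ) (a ε : ℕ → ℝ), (∀ i, ε i = 1 ∨ ε i = -1) →
    ‖∑ i ∈ s, (ε i * a i) • x i‖ ≤ K * ‖∑ i ∈ s, a i • x i‖

/-- A `C`-subsymmetric sequence: an unconditional basic sequence that is `C`-equivalent
to each of its subsequences. -/
def IsSubsymmetric {E : Type*} [NormedAddCommGroup E] [NormedSpace ℝ E]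
    (C : ℝ) (x : ℕ → E) : Prop :=
  IsUnconditionalSeq x ∧ ∀ φ : ℕ → ℕ, StrictMono φ → SeqEquiv C x (x ∘ φ)

/-- A Schauder basis of `E`: biorthogonal system whose partial sums of the expansion of
every vector converge to that vector. -/
structure SchauderBasis' (E : Type*) [NormedAddCommGroup E] [NormedSpace ℝ E] where
  e : ℕ → E
  coord : ℕ → E →L[ℝ] ℝ
  biorth : ∀ i j, coord i (e j) = if i = j then (1 : ℝ) else 0
  expand : ∀ x : E,
    Filter.Tendsto (fun n => ∑ i ∈ Finset.range n, coord i x • e i) atTop (𝓝 x)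

/-- A block sequence with respect to a Schauder basis: nonzero, finitely supported
vectors with successive supports. -/
def IsBlockSeq {E : Type*} [NormedAddCommGroup E] [NormedSpace ℝ E]
    (b : SchauderBasis' E) (x : ℕ → E) : Prop :=
  (∀ n, x n ≠ 0) ∧
  (∀ n, (Function.support fun i => b.coord i (x n)).Finite) ∧
  ∀ m n, m < n → ∀ i ∈ Function.support (fun i => b.coord i (x m)),
    ∀ j ∈ Function.support (fun j => b.coord j (x n)), i < j

/-- A block subspace: the closed linear span of a block sequence. -/
def IsBlockSubspace {E : Type*} [NormedAddCommGroup E] [NormedSpace ℝ E]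
    (b : SchauderBasis' E) (M : Submodule ℝ E) : Prop :=
  ∃ x : ℕ → E, IsBlockSeq b x ∧ M = (Submodule.span ℝ (Set.range x)).topologicalClosure

/-- An infinite-dimensional closed subspace. -/
def InfDimClosed {E : Type*} [NormedAddCommGroup E] [NormedSpace ℝ E]
    (M : Submodule ℝ E) : Prop :=
  IsClosed (M : Set E) ∧ ¬ FiniteDimensional ℝ M

/-- The quasi-order on subspaces: `L ≤ M` iff `L ⊆ M + F` for some finite-dimensional `F`. -/
def SubspaceLE {E : Type*} [NormedAddCommGroup E] [NormedSpace ℝ E]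
    (L M : Submodule ℝ E) : Prop :=
  ∃ F : Submodule ℝ E, FiniteDimensional ℝ F ∧ L ≤ M ⊔ F

/-- The equivalence relation `≐` induced by the quasi-order `SubspaceLE`. -/
def SubspaceEquiv {E : Type*} [NormedAddCommGroup E] [NormedSpace ℝ E]
    (L M : Submodule ℝ E) : Prop :=
  SubspaceLE L M ∧ SubspaceLE M L

/-- Two normed spaces are `c`-isomorphic: a linear isomorphism with
`(1/c)‖v‖ ≤ ‖Tv‖ ≤ c‖v‖`. -/
def IsoWithConst (c : ℝ) (X Y : Type*) [NormedAddCommGroup X] [NormedSpace ℝ X]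
    [NormedAddCommGroup Y] [NormedSpace ℝ Y] : Prop :=
  ∃ T : X ≃ₗ[ℝ] Y, ∀ v : X, (1 / c) * ‖v‖ ≤ ‖T v‖ ∧ ‖T v‖ ≤ c * ‖v‖

/-- A `c`-minimal Banach space: every infinite-dimensional closed subspace contains a
further infinite-dimensional closed subspace `c`-isomorphic to the whole space. -/
def CMinimalSpace (c : ℝ) (X : Type*) [NormedAddCommGroup X] [NormedSpace ℝ X] : Prop :=
  ∀ L : Submodule ℝ X, InfDimClosed L →
    ∃ N : Submodule ℝ X, N ≤ L ∧ InfDimClosed N ∧ IsoWithConst c ↥N X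

/-- A minimal Banach space: every infinite-dimensional closed subspace contains a
further infinite-dimensional closed subspace isomorphic to the whole space. -/
def MinimalSpace (X : Type*) [NormedAddCommGroup X] [NormedSpace ℝ X] : Prop :=
  ∀ L : Submodule ℝ X, InfDimClosed L →
    ∃ N : Submodule ℝ X, N ≤ L ∧ InfDimClosed N ∧ Nonempty (↥N ≃L[ℝ] X)
private lemma gap_chain {u : ℕ → ℕ} (h : ∀ k, u (k+1) + u (k+1) ≤ u k + u (k+2)) :
    ∀ k j, k ≤ j → u (k+1) + u j ≤ u k + u (j+1) := by
  intro k j hkj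
  induction j with
  | zero =>
    have hk : k = 0 := Nat.le_zero.mp hkj
    subst hk; omega
  | succ j ih =>
    rcases Nat.eq_or_lt_of_le hkj with rfl | hlt
    · omega
    · have h1 := ih (Nat.lt_succ_iff.mp hlt)
      have h2 := h j
      have hr : j + 1 + 1 = j + 2 := rfl
      rw [hr]
      omega

private lemma ext_mono (u σ : ℕ → ℕ) (hu : StrictMono u)
    (hc : ∀ k, u (k+1) + u (k+1) ≤ u k + u (k+2)) (hσ : StrictMono σ) :
    ∃ θ : ℕ → ℕ, StrictMono θ ∧ ∀ k, θ (u k) = u (σ k) := by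
  classical
  set Kf : ℕ → ℕ := fun n => Nat.findGreatest (fun k => u k ≤ n) n with hKfdef
  have hKspec : ∀ n, u 0 ≤ n → u (Kf n) ≤ n := fun n hn =>
    Nat.findGreatest_spec (P := fun k => u k ≤ n) (Nat.zero_le n) hn
  have hKmax : ∀ n k, u k ≤ n → k ≤ Kf n :=
    fun n k hk => Nat.le_findGreatest (le_trans hu.le_apply hk) hk
  have hKu : ∀ j, Kf (u j) = j := by
    intro j
    refine le_antisymm ?_ (hKmax (u j) j le_rfl)
    have h1 : u (Kf (u j)) ≤ u j := hKspec (u j) (hu.monotone (Nat.zero_le j))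
    exact hu.le_iff_le.mp h1
  set θ : ℕ → ℕ := fun n =>
    if n < u 0 then n + (u (σ 0) - u 0) else u (σ (Kf n)) + (n - u (Kf n)) with hθdef
  have hu00 : u 0 ≤ u (σ 0) := hu.monotone (Nat.zero_le _)
  refine ⟨θ, strictMono_nat_of_lt_succ ?_, ?_⟩
  · intro n
    by_cases h1 : n + 1 < u 0
    · have h0 : n < u 0 := by omega
      simp only [hθdef, if_pos h0, if_pos h1]; omega
    · by_cases h0 : n < u 0
      · have he : u 0 = n + 1 := by omega
        have hK1 : Kf (n+1) = 0 := by rw [← he, hKu 0]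
        simp only [hθdef, if_pos h0, if_neg h1, hK1]
        omega
      · have hn : u 0 ≤ n := le_of_not_gt h0
        have hkn : u (Kf n) ≤ n := hKspec n hn
        have hk1 : n < u (Kf n + 1) := by
          by_contra hcon
          push_neg at hcon
          have := hKmax n (Kf n + 1) hcon
          omega
        have hmono : Kf n ≤ Kf (n+1) := hKmax (n+1) (Kf n) (by omega)
        have hspec1 : u (Kf (n+1)) ≤ n + 1 := hKspec (n+1) (by omega)
        by_cases he : u (Kf n + 1) = n + 1
        · have hK' : Kf (n+1) = Kf n + 1 := by rw [← he, hKu]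
          have g1 : u (Kf n + 1) + u (σ (Kf n)) ≤ u (Kf n) + u (σ (Kf n) + 1) :=
            gap_chain hc (Kf n) (σ (Kf n)) hσ.le_apply
          have g2 : u (σ (Kf n) + 1) ≤ u (σ (Kf n + 1)) :=
            hu.monotone (hσ (Nat.lt_succ_self (Kf n)))
          simp only [hθdef, if_neg h0, if_neg h1, hK']
          omega
        · have hK' : Kf (n+1) = Kf n := by
            refine le_antisymm ?_ hmono
            by_contra hcon
            push_neg at hcon
            have h2 : u (Kf n) < u (Kf (n+1)) := hu hcon
            have h3 : u (Kf n + 1) ≤ u (Kf (n+1)) := hu.monotone hcon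
            have h4 : u (Kf (n+1)) ≤ n → Kf (n+1) ≤ Kf n := hKmax n (Kf (n+1))
            omega
          simp only [hθdef, if_neg h0, if_neg h1, hK']
          omega
  · intro k
    have hk0 : ¬ (u k < u 0) := not_lt.2 (hu.monotone (Nat.zero_le k))
    simp only [hθdef, if_neg hk0, hKu k, Nat.sub_self, add_zero]

open scoped Classical in
private noncomputable def cox (w : ℕ → ℕ) (d : ℕ → ℝ) : ℕ → ℝ := fun j =>
  if h : ∃ k, w k = j then d (Classical.choose h) else 0

private lemma cox_apply {w : ℕ → ℕ} (hw : Function.Injective w) (d : ℕ → ℝ) (k : ℕ) :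
    cox w d (w k) = d k := by
  have h : ∃ k', w k' = w k := ⟨k, rfl⟩
  simp only [cox, dif_pos h]
  congr 1
  exact hw (Classical.choose_spec h)

private lemma cox_sum {E : Type*} [NormedAddCommGroup E] [NormedSpace ℝ E]
    (z : ℕ → E) {w : ℕ → ℕ} (hw : StrictMono w) (d : ℕ → ℝ) (Kn M : ℕ)
    (hM : ∀ k, k < Kn ↔ w k < M) :
    ∑ j ∈ Finset.range M, cox w d j • z j = ∑ k ∈ Finset.range Kn, d k • z (w k) := by
  classical
  have himg : (Finset.range Kn).image w ⊆ Finset.range M := by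
    intro j hj
    obtain ⟨k, hk, rfl⟩ := Finset.mem_image.mp hj
    exact Finset.mem_range.mpr ((hM k).mp (Finset.mem_range.mp hk))
  have hzero : ∀ j ∈ Finset.range M, j ∉ (Finset.range Kn).image w →
      cox w d j • z j = 0 := by
    intro j hj hnj
    have : ¬ ∃ k, w k = j := by
      rintro ⟨k, rfl⟩
      exact hnj (Finset.mem_image.mpr ⟨k, Finset.mem_range.mpr
        ((hM k).mpr (Finset.mem_range.mp hj)), rfl⟩)
    simp [cox, dif_neg this]
  rw [← Finset.sum_subset himg hzero, Finset.sum_image (fun a _ c _ h => hw.injective h)]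
  exact Finset.sum_congr rfl fun k _ => by rw [cox_apply hw.injective]

private def pm (d : ℕ → ℝ) : ℕ → ℝ := fun k => if k % 2 = 0 then -(d (k/2)) else d (k/2)

private lemma pair_sum {E : Type*} [NormedAddCommGroup E] [NormedSpace ℝ E]
    (z : ℕ → E) (w : ℕ → ℕ) (d : ℕ → ℝ) (N : ℕ) :
    ∑ i ∈ Finset.range N, d i • (z (w (2*i+1)) - z (w (2*i))) =
    ∑ k ∈ Finset.range (2*N), pm d k • z (w k) := by
  induction N with
  | zero => simp
  | succ N ih =>
    have h2 : 2*(N+1) = (2*N + 1) + 1 := by ring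
    rw [Finset.sum_range_succ, ih, h2, Finset.sum_range_succ, Finset.sum_range_succ]
    have e1 : pm d (2*N) = -(d N) := by
      simp only [pm]
      have : (2*N) % 2 = 0 := by omega
      have h' : (2*N)/2 = N := by omega
      rw [if_pos this, h']
    have e2 : pm d (2*N+1) = d N := by
      simp only [pm]
      have : (2*N+1) % 2 = 1 := by omega
      have h' : (2*N+1)/2 = N := by omega
      rw [if_neg (by omega), h']
    rw [e1, e2, smul_sub]
    module

private lemma trunc_sum {E : Type*} [NormedAddCommGroup E] [NormedSpace ℝ E]
    (z : ℕ → E) (s : Finset ℕ) (a : ℕ → ℝ) :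
    ∑ i ∈ s, a i • z i =
    ∑ i ∈ Finset.range (s.sup id + 1), (if i ∈ s then a i else 0) • z i := by
  classical
  calc ∑ i ∈ s, a i • z i
      = ∑ i ∈ s, (if i ∈ s then a i else 0) • z i :=
        Finset.sum_congr rfl (fun i hi => by rw [if_pos hi])
    _ = ∑ i ∈ Finset.range (s.sup id + 1), (if i ∈ s then a i else 0) • z i := by
        refine Finset.sum_subset (fun i hi => Finset.mem_range.mpr
          (Nat.lt_succ_of_le (Finset.le_sup (f := id) hi))) ?_
        intro i _ hins
        simp [hins]

private lemma pm_even (d : ℕ → ℝ) (i : ℕ) : pm d (2*i) = -(d i) := by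
  simp only [pm]
  have h1 : (2*i) % 2 = 0 := by omega
  have h2 : (2*i)/2 = i := by omega
  rw [if_pos h1, h2]

private lemma pm_odd (d : ℕ → ℝ) (i : ℕ) : pm d (2*i+1) = d i := by
  simp only [pm]
  have h1 : ¬ ((2*i+1) % 2 = 0) := by omega
  have h2 : (2*i+1)/2 = i := by omega
  rw [if_neg h1, h2]

set_option maxHeartbeats 2000000 in
/-- If a Banach space with a Schauder basis contains a `C`-subsymmetric
sequence (`C ≥ 1`), then for every `δ > 0` it contains a `(C+δ)`-subsymmetric block
sequence. -/
theorem subsymmetric_block_sequence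
    {E : Type*} [NormedAddCommGroup E] [NormedSpace ℝ E] [CompleteSpace E]
    (b : SchauderBasis' E)
    (C : ℝ) (hC : 1 ≤ C)
    (hsub : ∃ x : ℕ → E, IsSubsymmetric C x)
    (δ : ℝ) (hδ : 0 < δ) :
    ∃ y : ℕ → E, IsBlockSeq b y ∧ IsSubsymmetric (C + δ) y := by
  classical
  obtain ⟨x, hxss⟩ := hsub
  obtain ⟨⟨⟨hx0, K, hK1, hKb⟩, Ku, hKu0, hKub⟩, hss⟩ := hxss
  have hCpos : (0:ℝ) < C := lt_of_lt_of_le one_pos hC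
  have hKpos : (0:ℝ) < K := lt_of_lt_of_le one_pos hK1
  have hx00 : (0:ℝ) < ‖x 0‖ := norm_pos_iff.mpr (hx0 0)
  -- upper bound
  have hxub : ∀ n, ‖x n‖ ≤ C * ‖x 0‖ := by
    intro n
    have hφ : StrictMono (fun k => k + n) := fun a b h => by simpa using h
    have h := (hss _ hφ {0} (fun _ => 1)).2
    simpa using h
  set m0 : ℝ := ‖x 0‖ / C with hm0def
  have hm0 : 0 < m0 := div_pos hx00 hCpos
  have hxlb : ∀ n, m0 ≤ ‖x n‖ := by
    intro n
    have hφ : StrictMono (fun k => k + n) := fun a b h => by simpa using h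
    have h := (hss _ hφ {0} (fun _ => 1)).1
    rw [hm0def, div_le_iff₀ hCpos]
    simp only [Finset.sum_singleton, one_smul, Function.comp_apply] at h
    rw [div_mul_eq_mul_div, one_mul, div_le_iff₀ hCpos] at h
    simpa [mul_comm] using h
  have h01 : ‖x 0‖ ≤ K * ‖x 0 - x 1‖ := by
    have h := hKb (fun i => if i = 0 then 1 else -1) 1 2 (by omega)
    simpa [Finset.sum_range_succ, sub_eq_add_neg] using h
  set μ : ℝ := ‖x 0‖ / (K * C) with hμdef
  have hμpos : 0 < μ := div_pos hx00 (mul_pos hKpos hCpos)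
  have hμle : ∀ p q : ℕ, p < q → μ ≤ ‖x q - x p‖ := by
    intro p q hpq
    have hφ : StrictMono (fun k => p + k * (q - p)) := by
      intro a c h
      simp only
      have : 1 ≤ q - p := by omega
      calc p + a * (q-p) < p + (a+1) * (q-p) := by nlinarith [this]
        _ ≤ p + c * (q-p) := by
            have : a + 1 ≤ c := h
            nlinarith [this]
    have h := (hss _ hφ (Finset.range 2) (fun i => if i = 0 then 1 else -1)).1
    simp only [Finset.sum_range_succ, Finset.sum_range_zero, Function.comp_apply] at h
    norm_num at h
    have hq : p + (q - p) = q := by omega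
    rw [hq] at h
    have h' : C⁻¹ * ‖x 0 - x 1‖ ≤ ‖x p - x q‖ := by
      simpa [sub_eq_add_neg] using h
    have h2 : ‖x 0 - x 1‖ ≤ C * ‖x p - x q‖ := by
      have := mul_le_mul_of_nonneg_left h' hCpos.le
      rwa [← mul_assoc, mul_inv_cancel₀ hCpos.ne', one_mul] at this
    have h3 : ‖x q - x p‖ = ‖x p - x q‖ := norm_sub_rev _ _
    rw [hμdef, h3, div_le_iff₀ (by positivity)]
    nlinarith [h01, h2, hKpos]
  -- coefficient bound from basic sequence property
  have hcoef : ∀ (c : ℕ → ℝ) (M j : ℕ), j < M →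
      |c j| * ‖x j‖ ≤ 2 * K * ‖∑ i ∈ Finset.range M, c i • x i‖ := by
    intro c M j hj
    have h1 := hKb c (j+1) M (by omega)
    have h2 := hKb c j M (by omega)
    have h3 : (∑ i ∈ Finset.range (j+1), c i • x i) - ∑ i ∈ Finset.range j, c i • x i
        = c j • x j := by rw [Finset.sum_range_succ]; abel
    calc |c j| * ‖x j‖ = ‖c j • x j‖ := by rw [norm_smul, Real.norm_eq_abs]
      _ = ‖(∑ i ∈ Finset.range (j+1), c i • x i) - ∑ i ∈ Finset.range j, c i • x i‖ := by
          rw [h3]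
      _ ≤ ‖∑ i ∈ Finset.range (j+1), c i • x i‖ + ‖∑ i ∈ Finset.range j, c i • x i‖ :=
          norm_sub_le _ _
      _ ≤ 2 * K * ‖∑ i ∈ Finset.range M, c i • x i‖ := by linarith
  -- diagonal extraction: subsequence with Cauchy coordinates
  have hbound : ∀ n i, |b.coord i (x n)| ≤ ‖b.coord i‖ * (C * ‖x 0‖) := by
    intro n i
    calc |b.coord i (x n)| = ‖b.coord i (x n)‖ := (Real.norm_eq_abs _).symm
      _ ≤ ‖b.coord i‖ * ‖x n‖ := (b.coord i).le_opNorm _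
      _ ≤ ‖b.coord i‖ * (C * ‖x 0‖) :=
          mul_le_mul_of_nonneg_left (hxub n) (norm_nonneg _)
  obtain ⟨g, -, ρ, hρ, hgconv⟩ :=
    (isCompact_univ_pi (fun i : ℕ => isCompact_Icc
        (a := -(‖b.coord i‖ * (C * ‖x 0‖))) (b := ‖b.coord i‖ * (C * ‖x 0‖)))).tendsto_subseq
      (x := fun n => (fun i => b.coord i (x n)))
      (fun n => Set.mem_univ_pi.mpr fun i => by
        have := abs_le.mp (hbound n i)
        exact Set.mem_Icc.mpr this)
  have hcoordC : ∀ i, CauchySeq (fun n => b.coord i (x (ρ n))) := by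
    intro i
    exact ((tendsto_pi_nhds.mp hgconv) i).cauchySeq
  have hcauchy : ∀ (i : ℕ) (τ : ℝ), 0 < τ → ∃ M : ℕ, ∀ s t : ℕ, M ≤ s → M ≤ t →
      |b.coord i (x (ρ t)) - b.coord i (x (ρ s))| ≤ τ := by
    intro i τ hτ
    obtain ⟨M, hM⟩ := Metric.cauchySeq_iff.mp (hcoordC i) τ hτ
    exact ⟨M, fun s t hs ht => by
      have := hM t ht s hs
      rw [Real.dist_eq] at this
      exact le_of_lt this⟩
  -- constants
  have hδC : (0:ℝ) < 2*(2*C+δ) := by nlinarith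
  set ε₀ : ℝ := min (μ/2) (min (2⁻¹) (δ/(2*(2*C+δ))) * m0/(4*K)) with hε₀def
  have hminpos : (0:ℝ) < min (2⁻¹) (δ/(2*(2*C+δ))) := lt_min (by norm_num) (by positivity)
  have hε₀pos : 0 < ε₀ := lt_min (by positivity) (by positivity)
  have hε₀μ : ε₀ ≤ μ/2 := min_le_left _ _
  set lam : ℝ := 4*K*ε₀/m0 with hlamdef
  have hlam0 : 0 ≤ lam := by positivity
  have hlam_le : lam ≤ min (2⁻¹) (δ/(2*(2*C+δ))) := by
    have h1 : ε₀ ≤ min (2⁻¹) (δ/(2*(2*C+δ))) * m0/(4*K) := min_le_right _ _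
    rw [hlamdef, div_le_iff₀ hm0]
    calc 4*K*ε₀ ≤ 4*K*(min (2⁻¹) (δ/(2*(2*C+δ))) * m0/(4*K)) := by
          apply mul_le_mul_of_nonneg_left h1 (by positivity)
      _ = min (2⁻¹) (δ/(2*(2*C+δ))) * m0 := by field_simp
  have hlam_half : lam ≤ 2⁻¹ := le_trans hlam_le (min_le_left _ _)
  have h1lam : (0:ℝ) < 1 - lam := by linarith
  have hlamδ : lam * (2*C+δ) ≤ δ := by
    have h1 : lam ≤ δ/(2*(2*C+δ)) := le_trans hlam_le (min_le_right _ _)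
    have h2 : lam * (2*(2*C+δ)) ≤ δ := (le_div_iff₀ hδC).mp h1
    nlinarith [hlam0]
  have hkey : (1+lam)*C ≤ (1-lam)*(C+δ) := by nlinarith [hlamδ]
  set εf : ℕ → ℝ := fun n => ε₀ * (2⁻¹:ℝ)^n with hεfdef
  have hεfpos : ∀ n, 0 < εf n := fun n => by positivity
  have hεfle : ∀ n, εf n ≤ ε₀ := by
    intro n
    have : ((2:ℝ)⁻¹)^n ≤ 1 := pow_le_one₀ (by norm_num) (by norm_num)
    calc εf n = ε₀ * (2⁻¹:ℝ)^n := rfl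
      _ ≤ ε₀ * 1 := mul_le_mul_of_nonneg_left this hε₀pos.le
      _ = ε₀ := mul_one _
  -- the inductive step
  have hstep : ∀ (n A B q : ℕ), ∃ T : ℕ × ℕ × ℕ,
      B + B ≤ A + T.1 ∧ T.1 + T.1 ≤ B + T.2.1 ∧ B < T.1 ∧ T.1 < T.2.1 ∧ q < T.2.2 ∧
      ‖(x T.2.1 - x T.1) -
          ∑ i ∈ Finset.range T.2.2, b.coord i (x T.2.1 - x T.1) • b.e i‖ ≤ εf n / 2 ∧
      ∑ i ∈ Finset.range q, ‖b.coord i (x T.2.1 - x T.1) • b.e i‖ ≤ εf n / 2 := by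
    intro n A B q
    have hτpos : ∀ i : ℕ, 0 < εf n / (2*(q+1)*(‖b.e i‖+1)) := fun i => by positivity
    choose Nf hNf using fun i => hcauchy i _ (hτpos i)
    set M := Finset.sup (Finset.range q) Nf with hMdef
    set s : ℕ := max M (max (B+1) (2*B)) with hsdef
    set A' := ρ s with hA'def
    set t : ℕ := max M (max (A'+1) (2*A')) with htdef
    set B' := ρ t with hB'def
    have hsM : M ≤ s := le_max_left _ _
    have htM : M ≤ t := le_max_left _ _
    have hA's : s ≤ A' := hρ.le_apply
    have hB't : t ≤ B' := hρ.le_apply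
    have hBA' : B < A' := by
      have : B + 1 ≤ s := le_trans (le_max_left _ _) (le_max_right _ _)
      omega
    have h2B : 2*B ≤ A' := by
      have : 2*B ≤ s := le_trans (le_max_right _ _) (le_max_right _ _)
      omega
    have hA'B' : A' < B' := by
      have : A' + 1 ≤ t := le_trans (le_max_left _ _) (le_max_right _ _)
      omega
    have h2A' : 2*A' ≤ B' := by
      have : 2*A' ≤ t := le_trans (le_max_right _ _) (le_max_right _ _)
      omega
    set v : E := x B' - x A' with hvdef
    -- coordinate smallness
    have hcsmall : ∀ i, i < q → |b.coord i v| ≤ εf n / (2*(q+1)*(‖b.e i‖+1)) := by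
      intro i hi
      have hMi : Nf i ≤ M := Finset.le_sup (Finset.mem_range.mpr hi)
      have := hNf i s t (le_trans hMi hsM) (le_trans hMi htM)
      rw [hvdef, map_sub]
      exact this
    have hqle : ∀ (c : ℝ), 0 < c → (q:ℝ) * (c / (2*((q:ℝ)+1))) ≤ c / 2 := by
      intro c hc
      rw [mul_div_assoc', div_le_div_iff₀ (by positivity) (by norm_num : (0:ℝ) < 2)]
      nlinarith [hc.le, Nat.cast_nonneg (α := ℝ) q]
    have hsum : ∑ i ∈ Finset.range q, ‖b.coord i v • b.e i‖ ≤ εf n / 2 := by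
      calc ∑ i ∈ Finset.range q, ‖b.coord i v • b.e i‖
          ≤ ∑ i ∈ Finset.range q, εf n / (2*(q+1)) := by
            apply Finset.sum_le_sum
            intro i hi
            rw [norm_smul, Real.norm_eq_abs]
            calc |b.coord i v| * ‖b.e i‖
                ≤ (εf n / (2*(q+1)*(‖b.e i‖+1))) * (‖b.e i‖+1) := by
                  apply mul_le_mul (hcsmall i (Finset.mem_range.mp hi)) (by linarith)
                    (norm_nonneg _) (le_of_lt (hτpos i))
              _ = εf n / (2*(q+1)) := by
                  field_simp
      _ = (q : ℝ) * (εf n / (2*(q+1))) := by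
            rw [Finset.sum_const, Finset.card_range, nsmul_eq_mul]
      _ ≤ εf n / 2 := hqle (εf n) (hεfpos n)
    -- tail smallness
    obtain ⟨N0, hN0⟩ := Metric.tendsto_atTop.mp (b.expand v) (εf n / 2) (by positivity)
    set q' : ℕ := max N0 (q+1) with hq'def
    have htail : ‖v - ∑ i ∈ Finset.range q', b.coord i v • b.e i‖ ≤ εf n / 2 := by
      have := hN0 q' (le_max_left _ _)
      rw [dist_eq_norm] at this
      rw [← norm_neg]
      simpa [neg_sub] using this.le
    refine ⟨(A', B', q'), ?_, ?_, hBA', hA'B', ?_, htail, hsum⟩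
    · show B + B ≤ A + A'
      omega
    · show A' + A' ≤ B + B'
      omega
    · show q < q'
      have : q + 1 ≤ q' := le_max_right _ _
      omega
  -- the recursion
  choose next hn1 hn2 hn3 hn4 hn5 hn6 hn7 using hstep
  set trip : ℕ → ℕ × ℕ × ℕ :=
    fun n => Nat.rec (0,0,1) (fun m ih => next m ih.1 ih.2.1 ih.2.2) n with htripdef
  have htrips : ∀ n, trip (n+1) = next n (trip n).1 (trip n).2.1 (trip n).2.2 :=
    fun n => rfl
  set A : ℕ → ℕ := fun n => (trip (n+1)).1 with hAdef
  set Bf : ℕ → ℕ := fun n => (trip (n+1)).2.1 with hBdef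
  set Q : ℕ → ℕ := fun n => (trip n).2.2 with hQdef
  have hQ0 : Q 0 = 1 := rfl
  have hAB : ∀ n, A n < Bf n := fun n => by
    have := hn4 n (trip n).1 (trip n).2.1 (trip n).2.2
    rw [← htrips n] at this
    exact this
  have hBA : ∀ n, Bf n < A (n+1) := fun n => by
    have := hn3 (n+1) (trip (n+1)).1 (trip (n+1)).2.1 (trip (n+1)).2.2
    rw [← htrips (n+1)] at this
    exact this
  have hconv1 : ∀ n, Bf n + Bf n ≤ A n + A (n+1) := fun n => by
    have := hn1 (n+1) (trip (n+1)).1 (trip (n+1)).2.1 (trip (n+1)).2.2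
    rw [← htrips (n+1)] at this
    exact this
  have hconv2 : ∀ n, A (n+1) + A (n+1) ≤ Bf n + Bf (n+1) := fun n => by
    have := hn2 (n+1) (trip (n+1)).1 (trip (n+1)).2.1 (trip (n+1)).2.2
    rw [← htrips (n+1)] at this
    exact this
  have hQmono : StrictMono Q := strictMono_nat_of_lt_succ (fun n => by
    have := hn5 n (trip n).1 (trip n).2.1 (trip n).2.2
    rw [← htrips n] at this
    exact this)
  set v : ℕ → E := fun n => x (Bf n) - x (A n) with hvdef
  have htail : ∀ n, ‖v n - ∑ i ∈ Finset.range (Q (n+1)), b.coord i (v n) • b.e i‖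
      ≤ εf n / 2 := fun n => by
    have := hn6 n (trip n).1 (trip n).2.1 (trip n).2.2
    rw [← htrips n] at this
    exact this
  have hinit : ∀ n, ∑ i ∈ Finset.range (Q n), ‖b.coord i (v n) • b.e i‖ ≤ εf n / 2 :=
    fun n => by
    have := hn7 n (trip n).1 (trip n).2.1 (trip n).2.2
    rw [← htrips n] at this
    exact this
  -- the interleaved index sequence
  set u : ℕ → ℕ := fun k => if k % 2 = 0 then A (k/2) else Bf (k/2) with hudef
  have hue : ∀ i, u (2*i) = A i := by
    intro i
    have h1 : (2*i) % 2 = 0 := by omega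
    have h2 : (2*i) / 2 = i := by omega
    simp only [hudef, h1, h2, if_pos]
  have huo : ∀ i, u (2*i+1) = Bf i := by
    intro i
    have h1 : ¬ ((2*i+1) % 2 = 0) := by omega
    have h2 : (2*i+1) / 2 = i := by omega
    simp only [hudef, h2, if_neg h1]
  have humono : StrictMono u := by
    apply strictMono_nat_of_lt_succ
    intro k
    rcases Nat.even_or_odd k with ⟨i, hi⟩ | ⟨i, hi⟩
    · have hk : k = 2*i := by omega
      subst hk
      rw [hue i, huo i]
      exact hAB i
    · have hk : k + 1 = 2*(i+1) := by omega
      have hk' : k = 2*i+1 := by omega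
      rw [hk, hk', hue (i+1), huo i]
      exact hBA i
  have hconvu : ∀ k, u (k+1) + u (k+1) ≤ u k + u (k+2) := by
    intro k
    rcases Nat.even_or_odd k with ⟨i, hi⟩ | ⟨i, hi⟩
    · have hk : k = 2*i := by omega
      subst hk
      have e2 : 2*i+2 = 2*(i+1) := by omega
      rw [huo i, e2, hue (i+1), hue i]
      exact hconv1 i
    · have hk : k = 2*i+1 := by omega
      subst hk
      have e1 : 2*i+1+1 = 2*(i+1) := by omega
      have e2 : 2*i+1+2 = 2*(i+1)+1 := by omega
      rw [e1, e2, hue (i+1), huo (i+1), huo i]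
      exact hconv2 i
  -- the block sequence
  set y : ℕ → E := fun n => ∑ i ∈ Finset.Ico (Q n) (Q (n+1)), b.coord i (v n) • b.e i
    with hydef
  have hyv : ∀ n, ‖y n - v n‖ ≤ εf n := by
    intro n
    have hQle : Q n ≤ Q (n+1) := (hQmono (Nat.lt_succ_self n)).le
    have hsplit : y n = (∑ i ∈ Finset.range (Q (n+1)), b.coord i (v n) • b.e i)
        - ∑ i ∈ Finset.range (Q n), b.coord i (v n) • b.e i :=
      Finset.sum_Ico_eq_sub _ hQle
    have h1 : y n - v n = ((∑ i ∈ Finset.range (Q (n+1)), b.coord i (v n) • b.e i) - v n)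
        - ∑ i ∈ Finset.range (Q n), b.coord i (v n) • b.e i := by
      rw [hsplit]; abel
    rw [h1]
    have h2 : ‖(∑ i ∈ Finset.range (Q (n+1)), b.coord i (v n) • b.e i) - v n‖ ≤ εf n / 2 := by
      rw [← norm_neg, neg_sub]
      exact htail n
    have h3 : ‖∑ i ∈ Finset.range (Q n), b.coord i (v n) • b.e i‖ ≤ εf n / 2 :=
      le_trans (norm_sum_le _ _) (hinit n)
    calc ‖_ - _‖ ≤ _ + _ := norm_sub_le _ _
      _ ≤ εf n / 2 + εf n / 2 := add_le_add h2 h3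
      _ = εf n := by ring
  have hvnorm : ∀ n, μ ≤ ‖v n‖ := fun n => hμle (A n) (Bf n) (hAB n)
  have hynorm : ∀ n, μ/2 ≤ ‖y n‖ := by
    intro n
    have h1 := hyv n
    have h2 := hvnorm n
    have h3 : εf n ≤ μ/2 := le_trans (hεfle n) hε₀μ
    have h4 : ‖v n‖ - ‖y n‖ ≤ ‖y n - v n‖ := by
      rw [← norm_neg (y n - v n), neg_sub]
      exact norm_sub_norm_le _ _
    linarith
  have hy0 : ∀ n, y n ≠ 0 := by
    intro n h
    have := hynorm n
    rw [h, norm_zero] at this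
    linarith
  have hycoord : ∀ n j, b.coord j (y n) =
      if j ∈ Finset.Ico (Q n) (Q (n+1)) then b.coord j (v n) else 0 := by
    intro n j
    have : b.coord j (y n) = ∑ i ∈ Finset.Ico (Q n) (Q (n+1)),
        (if j = i then b.coord i (v n) else 0) := by
      rw [hydef]
      simp only [map_sum, map_smul, smul_eq_mul]
      apply Finset.sum_congr rfl
      intro i _
      rw [b.biorth j i]
      by_cases h : j = i <;> simp [h]
    rw [this, Finset.sum_ite_eq]
  have hblock : (∀ n, (Function.support fun i => b.coord i (y n)).Finite) ∧
      ∀ m n, m < n → ∀ i ∈ Function.support (fun i => b.coord i (y m)),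
        ∀ j ∈ Function.support (fun j => b.coord j (y n)), i < j := by
    constructor
    · intro n
      apply Set.Finite.subset (Finset.Ico (Q n) (Q (n+1))).finite_toSet
      intro i hi
      simp only [Function.mem_support] at hi
      rw [hycoord n i] at hi
      by_contra hni
      rw [if_neg (fun hmem => hni (Finset.mem_coe.mpr hmem))] at hi
      exact hi rfl
    · intro m n hmn i hi j hj
      simp only [Function.mem_support] at hi hj
      rw [hycoord m i] at hi
      rw [hycoord n j] at hj
      have hiI : i ∈ Finset.Ico (Q m) (Q (m+1)) := by
        by_contra hni; rw [if_neg hni] at hi; exact hi rfl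
      have hjI : j ∈ Finset.Ico (Q n) (Q (n+1)) := by
        by_contra hnj; rw [if_neg hnj] at hj; exact hj rfl
      have h1 : i < Q (m+1) := (Finset.mem_Ico.mp hiI).2
      have h2 : Q n ≤ j := (Finset.mem_Ico.mp hjI).1
      have h3 : Q (m+1) ≤ Q n := hQmono.monotone hmn
      omega
  -- subsequence pattern machinery
  set σf : (ℕ → ℕ) → ℕ → ℕ := fun ψ k => 2 * ψ (k/2) + k % 2 with hσfdef
  have hσfe : ∀ ψ : ℕ → ℕ, ∀ i, σf ψ (2*i) = 2 * ψ i := by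
    intro ψ i
    have h1 : (2*i)/2 = i := by omega
    have h2 : (2*i) % 2 = 0 := by omega
    simp only [hσfdef, h1, h2, add_zero]
  have hσfo : ∀ ψ : ℕ → ℕ, ∀ i, σf ψ (2*i+1) = 2 * ψ i + 1 := by
    intro ψ i
    have h1 : (2*i+1)/2 = i := by omega
    have h2 : (2*i+1) % 2 = 1 := by omega
    simp only [hσfdef, h1, h2]
  have hσfmono : ∀ ψ : ℕ → ℕ, StrictMono ψ → StrictMono (σf ψ) := by
    intro ψ hψ
    apply strictMono_nat_of_lt_succ
    intro k
    rcases Nat.even_or_odd k with ⟨i, hi⟩ | ⟨i, hi⟩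
    · have hk : k = 2*i := by omega
      subst hk
      rw [hσfe ψ i, hσfo ψ i]
      omega
    · have hk : k = 2*i+1 := by omega
      subst hk
      have h1 : 2*i+1+1 = 2*(i+1) := by omega
      rw [h1, hσfo ψ i, hσfe ψ (i+1)]
      have : ψ i < ψ (i+1) := hψ (by omega)
      omega
  have hvu : ∀ i, v i = x (u (2*i+1)) - x (u (2*i)) := fun i => by
    rw [hue, huo]
  have hVid : ∀ (a : ℕ → ℝ) (N : ℕ),
      ∑ i ∈ Finset.range N, a i • v i = ∑ k ∈ Finset.range (2*N), pm a k • x (u k) := by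
    intro a N
    rw [← pair_sum x u a N]
    exact Finset.sum_congr rfl fun i _ => by rw [hvu]
  have hVψ : ∀ (a : ℕ → ℝ) (N : ℕ) (ψ : ℕ → ℕ),
      ∑ i ∈ Finset.range N, a i • v (ψ i)
        = ∑ k ∈ Finset.range (2*N), pm a k • x (u (σf ψ k)) := by
    intro a N ψ
    rw [← pair_sum x (fun k => u (σf ψ k)) a N]
    apply Finset.sum_congr rfl
    intro i _
    rw [hvu (ψ i)]
    simp only [hσfe ψ i, hσfo ψ i]
  have hMcond : ∀ (w : ℕ → ℕ), StrictMono w → ∀ N : ℕ, 1 ≤ N →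
      ∀ k, k < 2*N ↔ w k < w (2*N-1) + 1 := by
    intro w hw N hN k
    constructor
    · intro hk
      have : k ≤ 2*N-1 := by omega
      have := hw.monotone this
      omega
    · intro hk
      have : w k ≤ w (2*N-1) := by omega
      have := hw.le_iff_le.mp this
      omega
  -- T1 : C-equivalence of v with its subsequences
  have hT1 : ∀ (a : ℕ → ℝ) (N : ℕ) (ψ : ℕ → ℕ), StrictMono ψ →
      (1/C) * ‖∑ i ∈ Finset.range N, a i • v i‖ ≤ ‖∑ i ∈ Finset.range N, a i • v (ψ i)‖ ∧
      ‖∑ i ∈ Finset.range N, a i • v (ψ i)‖ ≤ C * ‖∑ i ∈ Finset.range N, a i • v i‖ := by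
    intro a N ψ hψ
    rcases Nat.eq_zero_or_pos N with rfl | hN
    · constructor <;> simp
    · obtain ⟨θ, hθm, hθu⟩ := ext_mono u (σf ψ) humono hconvu (hσfmono ψ hψ)
      set M := u (2*N-1) + 1 with hMdef
      have hMc := hMcond u humono N hN
      have e1 : ∑ j ∈ Finset.range M, cox u (pm a) j • x j
          = ∑ i ∈ Finset.range N, a i • v i := by
        rw [cox_sum x humono (pm a) (2*N) M hMc, ← hVid a N]
      have e2 : ∑ j ∈ Finset.range M, cox u (pm a) j • x (θ j)
          = ∑ i ∈ Finset.range N, a i • v (ψ i) := by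
        rw [cox_sum (fun j => x (θ j)) humono (pm a) (2*N) M hMc, hVψ a N ψ]
        exact Finset.sum_congr rfl fun k _ => by rw [hθu k]
      have h := hss θ hθm (Finset.range M) (cox u (pm a))
      simp only [Function.comp_apply] at h
      rw [e1, e2] at h
      exact h
  -- T2 : coefficient bound
  have hT2 : ∀ (a : ℕ → ℝ) (N : ℕ) (ψ : ℕ → ℕ), StrictMono ψ → ∀ i, i < N →
      |a i| * m0 ≤ 2*K*‖∑ i ∈ Finset.range N, a i • v (ψ i)‖ := by
    intro a N ψ hψ i hi
    set w : ℕ → ℕ := fun k => u (σf ψ k) with hwdef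
    have hwm : StrictMono w := humono.comp (hσfmono ψ hψ)
    set M := w (2*N-1) + 1 with hMdef
    have hMc := hMcond w hwm N (by omega)
    have e : ∑ j ∈ Finset.range M, cox w (pm a) j • x j
        = ∑ i ∈ Finset.range N, a i • v (ψ i) := by
      rw [cox_sum x hwm (pm a) (2*N) M hMc, ← hVψ a N ψ]
    have hj : w (2*i+1) < M := (hMc (2*i+1)).mp (by omega)
    have h := hcoef (cox w (pm a)) M (w (2*i+1)) hj
    rw [cox_apply hwm.injective, e, pm_odd] at h
    calc |a i| * m0 ≤ |a i| * ‖x (w (2*i+1))‖ :=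
          mul_le_mul_of_nonneg_left (hxlb _) (abs_nonneg _)
      _ ≤ 2*K*‖∑ i ∈ Finset.range N, a i • v (ψ i)‖ := h
  -- T3 : perturbation bound
  have hT3 : ∀ (a : ℕ → ℝ) (N : ℕ) (ψ : ℕ → ℕ), StrictMono ψ →
      ‖(∑ i ∈ Finset.range N, a i • y (ψ i)) - ∑ i ∈ Finset.range N, a i • v (ψ i)‖
        ≤ lam * ‖∑ i ∈ Finset.range N, a i • v (ψ i)‖ := by
    intro a N ψ hψ
    set Vn : ℝ := ‖∑ i ∈ Finset.range N, a i • v (ψ i)‖ with hVndef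
    have hVnn : 0 ≤ Vn := norm_nonneg _
    have hai : ∀ i, i < N → |a i| ≤ 2*K*Vn/m0 := by
      intro i hi
      rw [le_div_iff₀ hm0]
      exact hT2 a N ψ hψ i hi
    calc ‖(∑ i ∈ Finset.range N, a i • y (ψ i)) - ∑ i ∈ Finset.range N, a i • v (ψ i)‖
        = ‖∑ i ∈ Finset.range N, (a i • y (ψ i) - a i • v (ψ i))‖ := by
          rw [Finset.sum_sub_distrib]
      _ ≤ ∑ i ∈ Finset.range N, ‖a i • y (ψ i) - a i • v (ψ i)‖ := norm_sum_le _ _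
      _ = ∑ i ∈ Finset.range N, |a i| * ‖y (ψ i) - v (ψ i)‖ := by
          apply Finset.sum_congr rfl
          intro i _
          rw [← smul_sub, norm_smul, Real.norm_eq_abs]
      _ ≤ ∑ i ∈ Finset.range N, ((2*K*Vn/m0) * ε₀) * (2⁻¹:ℝ)^i := by
          apply Finset.sum_le_sum
          intro i hi
          have h2 : ‖y (ψ i) - v (ψ i)‖ ≤ ε₀ * (2⁻¹:ℝ)^i := by
            calc ‖y (ψ i) - v (ψ i)‖ ≤ εf (ψ i) := hyv (ψ i)
              _ = ε₀ * (2⁻¹:ℝ)^(ψ i) := rfl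
              _ ≤ ε₀ * (2⁻¹:ℝ)^i := by
                  apply mul_le_mul_of_nonneg_left _ hε₀pos.le
                  exact pow_le_pow_of_le_one (by norm_num) (by norm_num) ((hψ.le_apply : i ≤ ψ i))
          calc |a i| * ‖y (ψ i) - v (ψ i)‖
              ≤ (2*K*Vn/m0) * (ε₀ * (2⁻¹:ℝ)^i) :=
                mul_le_mul (hai i (Finset.mem_range.mp hi)) h2 (norm_nonneg _) (by positivity)
            _ = ((2*K*Vn/m0) * ε₀) * (2⁻¹:ℝ)^i := by ring
      _ = ((2*K*Vn/m0) * ε₀) * ∑ i ∈ Finset.range N, (2⁻¹:ℝ)^i := by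
          rw [Finset.mul_sum]
      _ ≤ ((2*K*Vn/m0) * ε₀) * 2 := by
          apply mul_le_mul_of_nonneg_left _ (by positivity)
          have h2 : ∀ i : ℕ, ((2:ℝ)⁻¹)^i = (1/2:ℝ)^i := fun i => by norm_num
          calc ∑ i ∈ Finset.range N, (2⁻¹:ℝ)^i
              = ∑ i ∈ Finset.range N, (1/2:ℝ)^i := Finset.sum_congr rfl fun i _ => h2 i
            _ ≤ 2 := sum_geometric_two_le N
      _ = lam * Vn := by
          rw [hlamdef]
          field_simp
          ring
  -- T4 : norms of y-sums vs v-sums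
  have hT4u : ∀ (a : ℕ → ℝ) (N : ℕ) (ψ : ℕ → ℕ), StrictMono ψ →
      ‖∑ i ∈ Finset.range N, a i • y (ψ i)‖
        ≤ (1+lam) * ‖∑ i ∈ Finset.range N, a i • v (ψ i)‖ := by
    intro a N ψ hψ
    have h := hT3 a N ψ hψ
    have h2 : ‖∑ i ∈ Finset.range N, a i • y (ψ i)‖
        ≤ ‖∑ i ∈ Finset.range N, a i • v (ψ i)‖ +
          ‖(∑ i ∈ Finset.range N, a i • y (ψ i)) - ∑ i ∈ Finset.range N, a i • v (ψ i)‖ := by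
      have := norm_add_le (∑ i ∈ Finset.range N, a i • v (ψ i))
        ((∑ i ∈ Finset.range N, a i • y (ψ i)) - ∑ i ∈ Finset.range N, a i • v (ψ i))
      simpa using this
    linarith [h2, h]
  have hT4l : ∀ (a : ℕ → ℝ) (N : ℕ) (ψ : ℕ → ℕ), StrictMono ψ →
      (1-lam) * ‖∑ i ∈ Finset.range N, a i • v (ψ i)‖
        ≤ ‖∑ i ∈ Finset.range N, a i • y (ψ i)‖ := by
    intro a N ψ hψ
    have h := hT3 a N ψ hψ
    have h2 : ‖∑ i ∈ Finset.range N, a i • v (ψ i)‖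
        ≤ ‖∑ i ∈ Finset.range N, a i • y (ψ i)‖ +
          ‖(∑ i ∈ Finset.range N, a i • y (ψ i)) - ∑ i ∈ Finset.range N, a i • v (ψ i)‖ := by
      have := norm_add_le (∑ i ∈ Finset.range N, a i • y (ψ i))
        ((∑ i ∈ Finset.range N, a i • v (ψ i)) - ∑ i ∈ Finset.range N, a i • y (ψ i))
      rw [← norm_neg ((∑ i ∈ Finset.range N, a i • v (ψ i))
        - ∑ i ∈ Finset.range N, a i • y (ψ i))] at this
      simpa [neg_sub] using this
    nlinarith [h2, h, norm_nonneg (∑ i ∈ Finset.range N, a i • v (ψ i))]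
  -- sign pattern transfer
  have hcoxsign : ∀ (a ε : ℕ → ℝ), (∀ i, ε i = 1 ∨ ε i = -1) →
      ∃ η : ℕ → ℝ, (∀ j, η j = 1 ∨ η j = -1) ∧
        ∀ j, cox u (pm (fun i => ε i * a i)) j = η j * cox u (pm a) j := by
    intro a ε hε
    refine ⟨fun j => if h : ∃ k, u k = j then ε ((Classical.choose h)/2) else 1, ?_, ?_⟩
    · intro j
      by_cases h : ∃ k, u k = j
      · simp only [dif_pos h]
        exact hε _
      · simp only [dif_neg h]
        norm_num
    · intro j
      by_cases h : ∃ k, u k = j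
      · simp only [cox, dif_pos h]
        set k := Classical.choose h with hkdef
        rcases Nat.even_or_odd k with ⟨i, hi⟩ | ⟨i, hi⟩
        · have hk : k = 2*i := by omega
          rw [hk, pm_even, pm_even]
          have h2 : (2*i)/2 = i := by omega
          rw [h2]
          ring
        · have hk : k = 2*i+1 := by omega
          rw [hk, pm_odd, pm_odd]
          have h2 : (2*i+1)/2 = i := by omega
          rw [h2]
      · simp only [cox, dif_neg h]
        ring
  -- y is a basic sequence
  have hybasic : IsBasicSeq y := by
    refine ⟨hy0, max 1 ((1+lam)*K/(1-lam)), le_max_left _ _, ?_⟩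
    intro a m n hmn
    have hXpos : (0:ℝ) < (1+lam)*K/(1-lam) :=
      div_pos (mul_pos (by linarith) hKpos) h1lam
    have hKy1 : (1+lam)*K/(1-lam) ≤ max 1 ((1+lam)*K/(1-lam)) := le_max_right _ _
    have hmaxpos : (0:ℝ) < max 1 ((1+lam)*K/(1-lam)) :=
      lt_of_lt_of_le one_pos (le_max_left _ _)
    rcases Nat.eq_zero_or_pos m with rfl | hm
    · simp only [Finset.range_zero, Finset.sum_empty, norm_zero]
      positivity
    · have hn1 : 1 ≤ n := le_trans hm hmn
      have hMm := hMcond u humono m hm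
      have hMn := hMcond u humono n hn1
      have em : ∑ j ∈ Finset.range (u (2*m-1)+1), cox u (pm a) j • x j
          = ∑ i ∈ Finset.range m, a i • v i := by
        rw [cox_sum x humono (pm a) (2*m) _ hMm, ← hVid a m]
      have en : ∑ j ∈ Finset.range (u (2*n-1)+1), cox u (pm a) j • x j
          = ∑ i ∈ Finset.range n, a i • v i := by
        rw [cox_sum x humono (pm a) (2*n) _ hMn, ← hVid a n]
      have hxvm : ‖∑ i ∈ Finset.range m, a i • v i‖
          ≤ K * ‖∑ i ∈ Finset.range n, a i • v i‖ := by
        rw [← em, ← en]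
        refine hKb _ _ _ ?_
        have := humono.monotone (show 2*m-1 ≤ 2*n-1 by omega)
        omega
      have h1 := hT4u a m id strictMono_id
      have h2 := hT4l a n id strictMono_id
      simp only [id_eq] at h1 h2
      calc ‖∑ i ∈ Finset.range m, a i • y i‖
          ≤ (1+lam) * ‖∑ i ∈ Finset.range m, a i • v i‖ := h1
        _ ≤ (1+lam) * (K * ‖∑ i ∈ Finset.range n, a i • v i‖) :=
            mul_le_mul_of_nonneg_left hxvm (by linarith)
        _ = ((1+lam)*K/(1-lam)) * ((1-lam) * ‖∑ i ∈ Finset.range n, a i • v i‖) := by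
            rw [div_mul_eq_mul_div, eq_div_iff h1lam.ne']
            ring
        _ ≤ ((1+lam)*K/(1-lam)) * ‖∑ i ∈ Finset.range n, a i • y i‖ :=
            mul_le_mul_of_nonneg_left h2 hXpos.le
        _ ≤ (max 1 ((1+lam)*K/(1-lam))) * ‖∑ i ∈ Finset.range n, a i • y i‖ :=
            mul_le_mul_of_nonneg_right hKy1 (norm_nonneg _)
  -- y is unconditional
  have hKupos : (0:ℝ) < (1+lam)*Ku/(1-lam) :=
    div_pos (mul_pos (by linarith) hKu0) h1lam
  have hyuncond : ∀ (s : Finset ℕ) (a ε : ℕ → ℝ), (∀ i, ε i = 1 ∨ ε i = -1) →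
      ‖∑ i ∈ s, (ε i * a i) • y i‖ ≤ ((1+lam)*Ku/(1-lam)) * ‖∑ i ∈ s, a i • y i‖ := by
    intro s a ε hε
    set N := s.sup id + 1 with hNdef
    set a' : ℕ → ℝ := fun i => if i ∈ s then a i else 0 with ha'def
    have ht1 : ∑ i ∈ s, a i • y i = ∑ i ∈ Finset.range N, a' i • y i := trunc_sum y s a
    have ht2 : ∑ i ∈ s, (ε i * a i) • y i
        = ∑ i ∈ Finset.range N, (ε i * a' i) • y i := by
      rw [trunc_sum y s (fun i => ε i * a i)]
      apply Finset.sum_congr rfl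
      intro i _
      by_cases h : i ∈ s <;> simp [ha'def, h]
    rw [ht1, ht2]
    obtain ⟨η, hη1, hη2⟩ := hcoxsign a' ε hε
    have hMc := hMcond u humono N (by omega)
    have e1 : ∑ j ∈ Finset.range (u (2*N-1)+1), cox u (pm a') j • x j
        = ∑ i ∈ Finset.range N, a' i • v i := by
      rw [cox_sum x humono (pm a') (2*N) _ hMc, ← hVid]
    have e2 : ∑ j ∈ Finset.range (u (2*N-1)+1), cox u (pm (fun i => ε i * a' i)) j • x j
        = ∑ i ∈ Finset.range N, (ε i * a' i) • v i := by
      rw [cox_sum x humono _ (2*N) _ hMc, ← hVid]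
    have hx := hKub (Finset.range (u (2*N-1)+1)) (cox u (pm a')) η hη1
    have e3 : ∑ j ∈ Finset.range (u (2*N-1)+1), (η j * cox u (pm a') j) • x j
        = ∑ j ∈ Finset.range (u (2*N-1)+1), cox u (pm (fun i => ε i * a' i)) j • x j :=
      Finset.sum_congr rfl fun j _ => by rw [hη2 j]
    rw [e3, e2, e1] at hx
    have h1 := hT4u (fun i => ε i * a' i) N id strictMono_id
    have h2 := hT4l a' N id strictMono_id
    simp only [id_eq] at h1 h2
    calc ‖∑ i ∈ Finset.range N, (ε i * a' i) • y i‖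
        ≤ (1+lam) * ‖∑ i ∈ Finset.range N, (ε i * a' i) • v i‖ := h1
      _ ≤ (1+lam) * (Ku * ‖∑ i ∈ Finset.range N, a' i • v i‖) :=
          mul_le_mul_of_nonneg_left hx (by linarith)
      _ = ((1+lam)*Ku/(1-lam)) * ((1-lam) * ‖∑ i ∈ Finset.range N, a' i • v i‖) := by
          rw [div_mul_eq_mul_div, eq_div_iff h1lam.ne']
          ring
      _ ≤ ((1+lam)*Ku/(1-lam)) * ‖∑ i ∈ Finset.range N, a' i • y i‖ :=
          mul_le_mul_of_nonneg_left h2 hKupos.le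
  -- y is (C+δ)-equivalent to its subsequences
  have hCδ : (0:ℝ) < C + δ := by linarith
  have hseq : ∀ φ : ℕ → ℕ, StrictMono φ → SeqEquiv (C+δ) y (y ∘ φ) := by
    intro φ hφ s a
    set N := s.sup id + 1 with hNdef
    set a' : ℕ → ℝ := fun i => if i ∈ s then a i else 0 with ha'def
    have ht1 : ∑ i ∈ s, a i • y i = ∑ i ∈ Finset.range N, a' i • y i := trunc_sum y s a
    have ht2 : ∑ i ∈ s, a i • (y ∘ φ) i = ∑ i ∈ Finset.range N, a' i • y (φ i) :=
      trunc_sum (fun i => y (φ i)) s a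
    rw [ht1, ht2]
    have hWu := hT4u a' N id strictMono_id
    have hWl := hT4l a' N id strictMono_id
    simp only [id_eq] at hWu hWl
    have hWψu := hT4u a' N φ hφ
    have hWψl := hT4l a' N φ hφ
    obtain ⟨hP1, hP2⟩ := hT1 a' N φ hφ
    have hPle : ‖∑ i ∈ Finset.range N, a' i • v i‖
        ≤ C * ‖∑ i ∈ Finset.range N, a' i • v (φ i)‖ := by
      have hmul := mul_le_mul_of_nonneg_left hP1 hCpos.le
      have e : C * (1/C * ‖∑ i ∈ Finset.range N, a' i • v i‖)
          = ‖∑ i ∈ Finset.range N, a' i • v i‖ := by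
        field_simp
      rw [e] at hmul
      exact hmul
    constructor
    · rw [div_mul_eq_mul_div, one_mul, div_le_iff₀ hCδ]
      have hchain : ‖∑ i ∈ Finset.range N, a' i • y i‖
          ≤ (C+δ) * ‖∑ i ∈ Finset.range N, a' i • y (φ i)‖ := by
        calc ‖∑ i ∈ Finset.range N, a' i • y i‖
            ≤ (1+lam) * ‖∑ i ∈ Finset.range N, a' i • v i‖ := hWu
          _ ≤ (1+lam) * (C * ‖∑ i ∈ Finset.range N, a' i • v (φ i)‖) :=
              mul_le_mul_of_nonneg_left hPle (by linarith)
          _ = ((1+lam)*C) * ‖∑ i ∈ Finset.range N, a' i • v (φ i)‖ := by ring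
          _ ≤ ((1-lam)*(C+δ)) * ‖∑ i ∈ Finset.range N, a' i • v (φ i)‖ :=
              mul_le_mul_of_nonneg_right hkey (norm_nonneg _)
          _ = (C+δ) * ((1-lam) * ‖∑ i ∈ Finset.range N, a' i • v (φ i)‖) := by ring
          _ ≤ (C+δ) * ‖∑ i ∈ Finset.range N, a' i • y (φ i)‖ :=
              mul_le_mul_of_nonneg_left hWψl (by linarith)
      nlinarith [hchain]
    · calc ‖∑ i ∈ Finset.range N, a' i • y (φ i)‖
          ≤ (1+lam) * ‖∑ i ∈ Finset.range N, a' i • v (φ i)‖ := hWψu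
        _ ≤ (1+lam) * (C * ‖∑ i ∈ Finset.range N, a' i • v i‖) :=
            mul_le_mul_of_nonneg_left hP2 (by linarith)
        _ = ((1+lam)*C) * ‖∑ i ∈ Finset.range N, a' i • v i‖ := by ring
        _ ≤ ((1-lam)*(C+δ)) * ‖∑ i ∈ Finset.range N, a' i • v i‖ :=
            mul_le_mul_of_nonneg_right hkey (norm_nonneg _)
        _ = (C+δ) * ((1-lam) * ‖∑ i ∈ Finset.range N, a' i • v i‖) := by ring
        _ ≤ (C+δ) * ‖∑ i ∈ Finset.range N, a' i • y i‖ :=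
            mul_le_mul_of_nonneg_left hWl (by linarith)
  exact ⟨y, ⟨hy0, hblock.1, hblock.2⟩,
    ⟨⟨hybasic, ⟨(1+lam)*Ku/(1-lam), hKupos, hyuncond⟩⟩, hseq⟩⟩
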